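/- Let M be the generalized adjacency matrix over F_2 of a sigma-plus game on the n_1 x ... x n_d grid that commutes with Id tensor ... tensor J_{n_i} tensor ... tensor Id for every i (so M is an F_2-linear combination of matrices J_{n_1}^{i_1} tensor ... tensor J_{n_d}^{i_d}). Then every completely symmetric configuration lies in the image of M; i.e., every completely symmetric configuration can be reached from the all-off configuration. -/

import Mathlib

open Matrix Finset

private def Jsm (m : ℕ) : Matrix (Fin m) (Fin m) (ZMod 2) :=
  Matrix.of fun j k => if (j : ℕ) + 1 = (k : ℕ) ∨ (k : ℕ) + 1 = (j : ℕ) then 1 else 0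

private def hv (m : ℕ) (a : ℕ) : Fin m → ZMod 2 :=
  fun j => (if (j : ℕ) = a then 1 else 0) + (if (j : ℕ) = m - 1 - a then 1 else 0)

private def Qm (m : ℕ) : Submodule (ZMod 2) (Fin m → ZMod 2) :=
  Submodule.span (ZMod 2) {w | ∃ k : ℕ, w = ((Jsm m) ^ k).mulVec (fun _ => 1)}

private def gk {m : ℕ} (k : Fin m) : Fin m → ZMod 2 :=
  fun j => if j = k ∨ j = k.rev then 1 else 0

private lemma dot_orth_exists {ι : Type} [Fintype ι] [DecidableEq ι]
    (M : Matrix ι ι (ZMod 2)) (hsymm : M.IsSymm) (y : ι → ZMod 2)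
    (h : ∀ x, M.mulVec x = 0 → y ⬝ᵥ x = 0) : ∃ z, M.mulVec z = y := by
  classical
  set f := M.mulVecLin with hf
  -- the dual functional x ↦ y ⬝ᵥ x
  let Φ : (ι → ZMod 2) →ₗ[ZMod 2] Module.Dual (ZMod 2) (ι → ZMod 2) :=
    { toFun := fun u =>
        { toFun := fun x => u ⬝ᵥ x
          map_add' := fun a b => dotProduct_add u a b
          map_smul' := fun c a => by simp [dotProduct_smul] }
      map_add' := fun a b => by ext x; simp [add_dotProduct]
      map_smul' := fun c a => by ext x; simp [smul_dotProduct] }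
  have hmem : Φ y ∈ (LinearMap.ker f).dualAnnihilator := by
    rw [Submodule.mem_dualAnnihilator]
    intro w hw
    exact h w (by simpa [hf] using hw)
  rw [← LinearMap.range_dualMap_eq_dualAnnihilator_ker] at hmem
  obtain ⟨ψ, hψ⟩ := hmem
  refine ⟨fun i => ψ (Pi.basisFun (ZMod 2) ι i), ?_⟩
  have hψz : ∀ x, ψ x = (fun i => ψ (Pi.basisFun (ZMod 2) ι i)) ⬝ᵥ x := by
    intro x
    have : ψ = Φ (fun i => ψ (Pi.basisFun (ZMod 2) ι i)) := by
      apply (Pi.basisFun (ZMod 2) ι).ext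
      intro i
      simp [Φ, Pi.basisFun_apply]
    conv_lhs => rw [this]
    rfl
  have key : ∀ x, (M.mulVec (fun i => ψ (Pi.basisFun (ZMod 2) ι i))) ⬝ᵥ x = y ⬝ᵥ x := by
    intro x
    have h1 : ψ (f x) = y ⬝ᵥ x := by
      have := congrFun (congrArg DFunLike.coe hψ) x
      simpa [LinearMap.dualMap_apply, Φ] using this
    rw [← h1, hψz (f x)]
    show _ = (fun i => ψ (Pi.basisFun (ZMod 2) ι i)) ⬝ᵥ (M.mulVec x)
    rw [dotProduct_comm, dotProduct_mulVec, dotProduct_comm]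
    congr 1
    rw [← Matrix.mulVec_transpose, hsymm.eq]
  exact dotProduct_eq _ _ fun u => key u

private lemma even_ker {ι : Type} [Fintype ι] [DecidableEq ι]
    (M : Matrix ι ι (ZMod 2)) (hsymm : M.IsSymm) (hdiag : ∀ v, M v v = 1)
    (x : ι → ZMod 2) (hx : M.mulVec x = 0) : ∑ v, x v = 0 := by
  classical
  have h0 : x ⬝ᵥ M.mulVec x = 0 := by rw [hx, dotProduct_zero]
  have hexp : x ⬝ᵥ M.mulVec x = ∑ p ∈ (univ ×ˢ univ : Finset (ι × ι)), x p.1 * M p.1 p.2 * x p.2 := by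
    rw [Finset.sum_product]
    simp only [dotProduct, Matrix.mulVec, Finset.mul_sum, mul_assoc]
  have hsplit : (univ ×ˢ univ : Finset (ι × ι)) = (univ : Finset ι).diag ∪ (univ : Finset ι).offDiag :=
    (Finset.diag_union_offDiag _).symm
  have hoff : ∑ p ∈ (univ : Finset ι).offDiag, x p.1 * M p.1 p.2 * x p.2 = 0 := by
    apply Finset.sum_involution (fun p _ => Prod.swap p)
    · intro p hp
      have hMsymm : M p.2 p.1 = M p.1 p.2 := by
        conv_lhs => rw [← hsymm.eq]
        rfl
      have : x p.2 * M p.2 p.1 * x p.1 = x p.1 * M p.1 p.2 * x p.2 := by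
        rw [hMsymm]; ring
      rw [Prod.swap]
      dsimp only
      rw [this]
      have : ∀ a : ZMod 2, a + a = 0 := by decide
      exact this _
    · intro p hp _
      have := (Finset.mem_offDiag.mp hp).2.2
      intro hc
      exact this (congrArg Prod.snd hc.symm ▸ (by
        have := congrArg Prod.fst hc
        simpa [Prod.swap] using this.symm))
    · intro p hp
      rcases Finset.mem_offDiag.mp hp with ⟨_, _, hne⟩
      exact Finset.mem_offDiag.mpr ⟨Finset.mem_univ _, Finset.mem_univ _, fun h => hne h.symm⟩
    · intro p hp; rfl
  have hdiagsum : ∑ p ∈ (univ : Finset ι).diag, x p.1 * M p.1 p.2 * x p.2 = ∑ v, x v := by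
    rw [Finset.sum_diag]
    apply Finset.sum_congr rfl
    intro v _
    rw [hdiag v]
    have : ∀ a : ZMod 2, a * 1 * a = a := by decide
    exact this _
  rw [hexp, hsplit, Finset.sum_union (Finset.disjoint_diag_offDiag _), hoff, hdiagsum, add_zero] at h0
  exact h0

private lemma Jsm_mulVec (m : ℕ) (f : Fin m → ZMod 2) (j : Fin m) :
    (Jsm m).mulVec f j =
      (if h : (j : ℕ) + 1 < m then f ⟨(j : ℕ) + 1, h⟩ else 0) +
      (if 0 < (j : ℕ) then f ⟨(j : ℕ) - 1, Nat.lt_of_le_of_lt (Nat.sub_le _ _) j.isLt⟩ else 0) := by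
  classical
  have hsplit : ∀ k : Fin m, (Jsm m) j k =
      (if (j : ℕ) + 1 = (k : ℕ) then 1 else 0) + (if (k : ℕ) + 1 = (j : ℕ) then 1 else 0) := by
    intro k
    show (if (j : ℕ) + 1 = (k : ℕ) ∨ (k : ℕ) + 1 = (j : ℕ) then (1 : ZMod 2) else 0) = _
    split_ifs <;> first | rfl | omega
  unfold Matrix.mulVec dotProduct
  simp only [hsplit, add_mul]
  rw [Finset.sum_add_distrib]
  congr 1
  · by_cases h : (j : ℕ) + 1 < m
    · rw [dif_pos h]
      rw [Finset.sum_eq_single (⟨(j : ℕ) + 1, h⟩ : Fin m)]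
      · simp
      · intro k _ hk
        rw [if_neg, zero_mul]
        intro hc
        exact hk (Fin.ext hc.symm)
      · intro hc; exact absurd (Finset.mem_univ _) hc
    · rw [dif_neg h]
      apply Finset.sum_eq_zero
      intro k _
      rw [if_neg, zero_mul]
      intro hc
      exact h (hc ▸ k.isLt)
  · by_cases h : 0 < (j : ℕ)
    · rw [if_pos h]
      rw [Finset.sum_eq_single (⟨(j : ℕ) - 1, Nat.lt_of_le_of_lt (Nat.sub_le _ _) j.isLt⟩ : Fin m)]
      · rw [if_pos, one_mul]
        simp only [Fin.val_mk]
        omega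
      · intro k _ hk
        rw [if_neg, zero_mul]
        intro hc
        apply hk
        apply Fin.ext
        simp only [Fin.val_mk]
        omega
      · intro hc; exact absurd (Finset.mem_univ _) hc
    · rw [if_neg h]
      apply Finset.sum_eq_zero
      intro k _
      rw [if_neg, zero_mul]
      omega

private lemma Jsm_one (m : ℕ) : (Jsm m).mulVec (fun _ => 1) = hv m 0 := by
  funext j
  rw [Jsm_mulVec]
  unfold hv
  have hj := j.isLt
  split_ifs <;> first | rfl | omega | decide

private lemma Jsm_hv0 (m : ℕ) (hm : 2 ≤ m) : (Jsm m).mulVec (hv m 0) = hv m 1 := by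
  funext j
  rw [Jsm_mulVec]
  unfold hv
  have hj := j.isLt
  simp only [Fin.val_mk]
  split_ifs <;> first | rfl | contradiction | omega | decide

set_option maxHeartbeats 2000000 in
private lemma Jsm_hv (m : ℕ) (a : ℕ) (ha1 : 1 ≤ a) (ha2 : a + 1 ≤ m - 1) :
    (Jsm m).mulVec (hv m a) = hv m (a - 1) + hv m (a + 1) := by
  funext j
  rw [Jsm_mulVec]
  unfold hv
  have hj := j.isLt
  simp only [Pi.add_apply, Fin.val_mk]
  split_ifs <;> first | rfl | contradiction | omega | decide

private lemma one_mem_Qm (m : ℕ) : (fun _ => (1 : ZMod 2)) ∈ Qm m :=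
  Submodule.subset_span ⟨0, by rw [pow_zero, Matrix.one_mulVec]⟩

private lemma Jsm_Qm (m : ℕ) (w : Fin m → ZMod 2) (hw : w ∈ Qm m) :
    (Jsm m).mulVec w ∈ Qm m := by
  induction hw using Submodule.span_induction with
  | mem w hw =>
    obtain ⟨k, rfl⟩ := hw
    exact Submodule.subset_span ⟨k + 1, by rw [Matrix.mulVec_mulVec, pow_succ']⟩
  | zero => rw [Matrix.mulVec_zero]; exact Submodule.zero_mem _
  | add a b _ _ ha hb => rw [Matrix.mulVec_add]; exact Submodule.add_mem _ ha hb
  | smul c a _ ha => rw [Matrix.mulVec_smul]; exact Submodule.smul_mem _ _ ha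

private lemma hv_mem_Qm (m : ℕ) : ∀ a, a ≤ m - 1 → hv m a ∈ Qm m := by
  intro a
  induction a using Nat.strong_induction_on with
  | _ a ih =>
    match a with
    | 0 => intro _; rw [← Jsm_one]; exact Jsm_Qm m _ (one_mem_Qm m)
    | 1 => intro h
           rw [← Jsm_hv0 m (by omega)]
           exact Jsm_Qm m _ (ih 0 (by omega) (by omega))
    | (a + 2) =>
      intro h
      have hrec := Jsm_hv m (a + 1) (by omega) (by omega)
      have : hv m (a + 2) = (Jsm m).mulVec (hv m (a + 1)) + hv m a := by
        rw [hrec]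
        show _ = hv m (a + 1 - 1) + hv m (a + 1 + 1) + hv m a
        have h1 : a + 1 - 1 = a := by omega
        rw [h1]
        have h2 : a + 1 + 1 = a + 2 := rfl
        rw [h2]
        funext j
        simp only [Pi.add_apply]
        have : ∀ u v : ZMod 2, u = v + u + v := by decide
        exact this _ _
      rw [this]
      exact Submodule.add_mem _ (Jsm_Qm m _ (ih (a + 1) (by omega) (by omega)))
        (ih a (by omega) (by omega))


private lemma gk_mem_Qm {m : ℕ} (k : Fin m) : gk k ∈ Qm m := by
  have hrev : ((k.rev : Fin m) : ℕ) = m - 1 - (k : ℕ) := by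
    rw [Fin.val_rev]; omega
  by_cases hmid : (k : ℕ) = m - 1 - (k : ℕ)
  · -- middle element : gk k = 1 + ∑_{a < k} hv m a
    have hkey : gk k = (fun _ => (1 : ZMod 2)) + ∑ a ∈ Finset.range (k : ℕ), hv m a := by
      funext j
      have hj := j.isLt
      have hk := k.isLt
      simp only [Pi.add_apply, Finset.sum_apply]
      unfold gk hv
      have hsum1 : ∑ a ∈ Finset.range (k : ℕ), (if (j : ℕ) = a then (1 : ZMod 2) else 0)
          = if (j : ℕ) ∈ Finset.range (k : ℕ) then 1 else 0 := Finset.sum_ite_eq _ _ _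
      rw [Finset.sum_add_distrib, hsum1]
      have hsum2 : ∑ a ∈ Finset.range (k : ℕ), (if (j : ℕ) = m - 1 - a then (1 : ZMod 2) else 0)
          = if m - 1 - (j : ℕ) ∈ Finset.range (k : ℕ) then 1 else 0 := by
        rw [← Finset.sum_ite_eq (Finset.range (k : ℕ)) (m - 1 - (j : ℕ)) (fun _ => (1 : ZMod 2))]
        apply Finset.sum_congr rfl
        intro a ha
        rw [Finset.mem_range] at ha
        congr 1
        simp only [eq_iff_iff]
        constructor <;> intro hh <;> omega
      rw [hsum2]
      simp only [Finset.mem_range, Fin.ext_iff, hrev]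
      split_ifs <;> first | rfl | contradiction | omega | decide
    rw [hkey]
    exact Submodule.add_mem _ (one_mem_Qm m)
      (Submodule.sum_mem _ (fun a ha => hv_mem_Qm m a (by
        rw [Finset.mem_range] at ha; have := k.isLt; omega)))
  · -- non-middle : gk k = hv m k
    have hkey : gk k = hv m (k : ℕ) := by
      funext j
      unfold gk hv
      simp only [Fin.ext_iff, hrev]
      split_ifs <;> first | rfl | contradiction | omega | decide
    rw [hkey]
    exact hv_mem_Qm m (k : ℕ) (by have := k.isLt; omega)


private def rep1 {m : ℕ} (a : Fin m) : Fin m :=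
  if ((a.rev : Fin m) : ℕ) < (a : ℕ) then a.rev else a

private lemma rep1_self_or_rev {m : ℕ} (a : Fin m) : a = rep1 a ∨ a = (rep1 a).rev := by
  unfold rep1
  split_ifs with h
  · right; rw [Fin.rev_rev]
  · left; rfl

private lemma rep1_rev {m : ℕ} (a : Fin m) : rep1 a.rev = rep1 a := by
  unfold rep1
  rw [Fin.rev_rev]
  rcases lt_trichotomy ((a : ℕ)) ((a.rev : ℕ)) with h | h | h
  · rw [if_pos h, if_neg (by omega)]
  · rw [if_neg (by omega), if_neg (by omega)]
    exact Fin.ext h.symm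
  · rw [if_neg (by omega), if_pos h]

private lemma rep1_idem {m : ℕ} (a : Fin m) : rep1 (rep1 a) = rep1 a := by
  rcases rep1_self_or_rev a with h | h
  · conv_lhs => rw [← h]
  · have h2 : rep1 a = a.rev := by
      conv_rhs => rw [h, Fin.rev_rev]
    rw [h2, rep1_rev]
    exact h2

private lemma rep1_eq_iff {m : ℕ} (w v : Fin m) :
    rep1 w = rep1 v ↔ (w = v ∨ w = v.rev) := by
  constructor
  · intro h
    rcases rep1_self_or_rev w with hw | hw <;> rcases rep1_self_or_rev v with hv | hv
    · left; rw [hw, h, ← hv]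
    · have hv2 : rep1 v = v.rev := by
        conv_rhs => rw [hv, Fin.rev_rev]
      right; rw [hw, h, hv2]
    · right; rw [hw, h, ← hv]
    · left; rw [hw, h, ← hv]
  · rintro (rfl | rfl)
    · rfl
    · exact rep1_rev v

section Grid
variable {d : ℕ} (n : Fin d → ℕ)

private def tens (u : (l : Fin d) → Fin (n l) → ZMod 2) : ((l : Fin d) → Fin (n l)) → ZMod 2 :=
  fun v => ∏ l, u l (v l)

private lemma tens_apply_update (u : (l : Fin d) → Fin (n l) → ZMod 2)
    (v : (l : Fin d) → Fin (n l)) (i : Fin d) (k : Fin (n i)) :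
    tens n u (Function.update v i k) = u i k * ∏ l ∈ Finset.univ.erase i, u l (v l) := by
  unfold tens
  rw [← Finset.mul_prod_erase Finset.univ _ (Finset.mem_univ i)]
  rw [Function.update_self]
  congr 1
  apply Finset.prod_congr rfl
  intro l hl
  rw [Function.update_of_ne (Finset.ne_of_mem_erase hl)]

private lemma tens_update (u : (l : Fin d) → Fin (n l) → ZMod 2)
    (i : Fin d) (c : Fin (n i) → ZMod 2) (v : (l : Fin d) → Fin (n l)) :
    tens n (Function.update u i c) v = c (v i) * ∏ l ∈ Finset.univ.erase i, u l (v l) := by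
  unfold tens
  rw [← Finset.mul_prod_erase Finset.univ _ (Finset.mem_univ i)]
  rw [Function.update_self]
  congr 1
  apply Finset.prod_congr rfl
  intro l hl
  rw [Function.update_of_ne (Finset.ne_of_mem_erase hl)]

variable (J : Fin d → Matrix ((l : Fin d) → Fin (n l)) ((l : Fin d) → Fin (n l)) (ZMod 2))
variable (hJ : ∀ (i : Fin d) (v w : (l : Fin d) → Fin (n l)), J i v w =
      if (∀ l, l ≠ i → v l = w l) ∧ ((v i : ℕ) + 1 = w i ∨ (w i : ℕ) + 1 = v i)
      then 1 else 0)

include hJ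

private lemma J_tens (i : Fin d) (u : (l : Fin d) → Fin (n l) → ZMod 2) :
    (J i).mulVec (tens n u) = tens n (Function.update u i ((Jsm (n i)).mulVec (u i))) := by
  classical
  funext v
  rw [tens_update]
  show ∑ w, J i v w * tens n u w = _
  have hstep : ∀ w, J i v w * tens n u w
      = ∑ k : Fin (n i), if k = w i then J i v w * tens n u w else 0 := by
    intro w
    rw [Finset.sum_ite_eq' (Finset.univ : Finset (Fin (n i))) (w i) (fun _ => J i v w * tens n u w)]
    simp
  calc ∑ w, J i v w * tens n u w
      = ∑ w, ∑ k : Fin (n i), if k = w i then J i v w * tens n u w else 0 := by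
        exact Finset.sum_congr rfl fun w _ => hstep w
    _ = ∑ k : Fin (n i), ∑ w, if k = w i then J i v w * tens n u w else 0 := Finset.sum_comm
    _ = ∑ k : Fin (n i), J i v (Function.update v i k) * tens n u (Function.update v i k) := by
        apply Finset.sum_congr rfl
        intro k _
        rw [Finset.sum_eq_single (Function.update v i k)]
        · rw [if_pos (Function.update_self i k v).symm]
        · intro w _ hw
          by_cases hk : k = w i
          · rw [if_pos hk]
            have : J i v w = 0 := by
              rw [hJ]
              rw [if_neg]
              intro ⟨h1, _⟩
              apply hw
              funext l
              by_cases hl : l = i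
              · subst hl; rw [Function.update_self]; exact hk.symm
              · rw [Function.update_of_ne hl]; exact (h1 l hl).symm
            rw [this, zero_mul]
          · rw [if_neg hk]
        · intro hc; exact absurd (Finset.mem_univ _) hc
    _ = ∑ k : Fin (n i), Jsm (n i) (v i) k * tens n u (Function.update v i k) := by
        apply Finset.sum_congr rfl
        intro k _
        congr 1
        rw [hJ]
        show _ = (if (v i : ℕ) + 1 = (k : ℕ) ∨ (k : ℕ) + 1 = (v i : ℕ) then (1 : ZMod 2) else 0)
        congr 1
        simp only [eq_iff_iff]
        constructor
        · rintro ⟨_, h2⟩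
          simpa [Function.update_self] using h2
        · intro h2
          refine ⟨fun l hl => by rw [Function.update_of_ne hl], ?_⟩
          simpa [Function.update_self] using h2
    _ = ((Jsm (n i)).mulVec (u i)) (v i) * ∏ l ∈ Finset.univ.erase i, u l (v l) := by
        show _ = (∑ k, Jsm (n i) (v i) k * u i k) * _
        rw [Finset.sum_mul]
        apply Finset.sum_congr rfl
        intro k _
        rw [tens_apply_update, mul_assoc]

variable (M : Matrix ((l : Fin d) → Fin (n l)) ((l : Fin d) → Fin (n l)) (ZMod 2))
variable (hsymm : M.IsSymm) (hdiag : ∀ v, M v v = 1)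
variable (hcomm : ∀ i, M * J i = J i * M)

private lemma J_symm (i : Fin d) : (J i)ᵀ = J i := by
  ext v w
  rw [Matrix.transpose_apply, hJ, hJ]
  congr 1
  simp only [eq_iff_iff]
  constructor <;> rintro ⟨h1, h2⟩ <;>
    exact ⟨fun l hl => (h1 l hl).symm, h2.symm⟩

private lemma J_dot (i : Fin d) (p x : ((l : Fin d) → Fin (n l)) → ZMod 2) :
    ((J i).mulVec p) ⬝ᵥ x = p ⬝ᵥ ((J i).mulVec x) := by
  rw [dotProduct_comm, dotProduct_mulVec, ← Matrix.mulVec_transpose, J_symm n J hJ,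
    dotProduct_comm]

include hcomm hsymm hdiag

private lemma J_ker (i : Fin d) (x : ((l : Fin d) → Fin (n l)) → ZMod 2)
    (hx : M.mulVec x = 0) : M.mulVec ((J i).mulVec x) = 0 := by
  rw [Matrix.mulVec_mulVec, hcomm, ← Matrix.mulVec_mulVec, hx, Matrix.mulVec_zero]

private lemma pure_orth : ∀ (N : ℕ) (a : Fin d → ℕ), (∑ l, a l) = N →
    ∀ x, M.mulVec x = 0 →
      tens n (fun l => ((Jsm (n l)) ^ (a l)).mulVec (fun _ => 1)) ⬝ᵥ x = 0 := by
  intro N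
  induction N using Nat.strong_induction_on with
  | _ N ih =>
    intro a hsum x hx
    by_cases hz : ∀ l, a l = 0
    · have h1 : tens n (fun l => ((Jsm (n l)) ^ (a l)).mulVec (fun _ => 1))
          = fun _ => (1 : ZMod 2) := by
        funext v
        unfold tens
        apply Finset.prod_eq_one
        intro l _
        simp only [hz l, pow_zero, Matrix.one_mulVec]
      rw [h1]
      have : (fun _ => (1 : ZMod 2)) ⬝ᵥ x = ∑ v, x v := by
        unfold dotProduct; simp
      rw [this]
      exact even_ker M hsymm hdiag x hx
    · push_neg at hz
      obtain ⟨i, hi⟩ := hz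
      have hN : 0 < N := by
        by_contra hcon
        have hN0 : N = 0 := by omega
        subst hN0
        rw [Finset.sum_eq_zero_iff] at hsum
        exact hi (hsum i (Finset.mem_univ i))
      set a' := Function.update a i (a i - 1) with ha'
      have hsum' : ∑ l, a' l = N - 1 := by
        rw [ha', Finset.sum_update_of_mem (Finset.mem_univ i)]
        have : ∑ l, a l = a i + ∑ l ∈ Finset.univ \ {i}, a l := by
          rw [Finset.sum_eq_sum_sdiff_singleton_add (Finset.mem_univ i)]
          omega
        omega
      have harg : (fun l => ((Jsm (n l)) ^ (a l)).mulVec (fun _ => (1 : ZMod 2)))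
          = Function.update (fun l => ((Jsm (n l)) ^ (a' l)).mulVec (fun _ => 1)) i
              ((Jsm (n i)).mulVec (((Jsm (n i)) ^ (a' i)).mulVec (fun _ => 1))) := by
        funext l
        by_cases hl : l = i
        · subst hl
          rw [Function.update_self]
          rw [Matrix.mulVec_mulVec, ← pow_succ']
          have hexp : a' l + 1 = a l := by rw [ha', Function.update_self]; omega
          rw [hexp]
        · rw [Function.update_of_ne hl]
          have hexp : a' l = a l := by rw [ha', Function.update_of_ne hl]
          rw [hexp]
      have hform : tens n (fun l => ((Jsm (n l)) ^ (a l)).mulVec (fun _ => (1 : ZMod 2)))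
          = (J i).mulVec (tens n (fun l => ((Jsm (n l)) ^ (a' l)).mulVec (fun _ => 1))) := by
        rw [J_tens n J hJ, ← harg]
      rw [hform, J_dot n J hJ]
      exact ih (N - 1) (by omega) a' hsum' _ (J_ker n J hJ M hsymm hdiag hcomm i x hx)

private lemma slot_orth : ∀ (t : ℕ) (u : (l : Fin d) → Fin (n l) → ZMod 2),
    (∀ l : Fin d, (l : ℕ) < t → u l ∈ Qm (n l)) →
    (∀ l : Fin d, t ≤ (l : ℕ) → ∃ k : ℕ, u l = ((Jsm (n l)) ^ k).mulVec (fun _ => 1)) →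
    ∀ x, M.mulVec x = 0 → tens n u ⬝ᵥ x = 0 := by
  intro t
  induction t with
  | zero =>
    intro u _ hP x hx
    choose k hk using fun l => hP l (Nat.zero_le _)
    have : u = fun l => ((Jsm (n l)) ^ (k l)).mulVec (fun _ => 1) := funext hk
    rw [this]
    exact pure_orth n J hJ M hsymm hdiag hcomm (∑ l, k l) k rfl x hx
  | succ t ih =>
    intro u hQ hP x hx
    by_cases ht : t < d
    · set i : Fin d := ⟨t, ht⟩ with hi
      have hui : u i ∈ Qm (n i) := hQ i (by rw [hi]; exact Nat.lt_succ_self t)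
      have hgoal : ∀ w ∈ Qm (n i), tens n (Function.update u i w) ⬝ᵥ x = 0 := by
        intro w hw
        induction hw using Submodule.span_induction with
        | mem w hwmem =>
          obtain ⟨k, rfl⟩ := hwmem
          apply ih (Function.update u i _)
          · intro l hl
            have hli : l ≠ i := by
              intro hc; subst hc
              rw [hi] at hl
              simp only [Fin.val_mk] at hl
              omega
            rw [Function.update_of_ne hli]
            exact hQ l (by omega)
          · intro l hl
            by_cases hli : l = i
            · subst hli
              rw [Function.update_self]
              exact ⟨k, rfl⟩
            · rw [Function.update_of_ne hli]
              apply hP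
              have hne : (l : ℕ) ≠ t := by
                intro hc
                exact hli (Fin.ext (by rw [hi, hc]))
              omega
          · exact hx
        | zero =>
          have : tens n (Function.update u i 0) = 0 := by
            funext v
            rw [tens_update]
            simp
          rw [this, zero_dotProduct]
        | add w₁ w₂ _ _ h1 h2 =>
          have : tens n (Function.update u i (w₁ + w₂))
              = tens n (Function.update u i w₁) + tens n (Function.update u i w₂) := by
            funext v
            simp only [Pi.add_apply, tens_update, add_mul]
          rw [this, add_dotProduct, h1, h2, add_zero]
        | smul c w _ hw =>
          have : tens n (Function.update u i (c • w)) = c • tens n (Function.update u i w) := by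
            funext v
            simp only [Pi.smul_apply, tens_update, smul_eq_mul, mul_assoc]
          rw [this, smul_dotProduct, hw, smul_zero]
      have := hgoal (u i) hui
      rwa [Function.update_eq_self] at this
    · apply ih u
      · intro l hl
        exact hQ l (by omega)
      · intro l hl
        exfalso
        have := l.isLt
        omega
      · exact hx
end Grid

/-- For a sigma-plus game on a `d`-dimensional grid whose (symmetric, all-ones-diagonal)
generalized adjacency matrix `M` commutes with each elementary game `J_{n_i}`, every
completely symmetric configuration lies in the image of `M`. -/
theorem stmt_19 (d : ℕ) (n : Fin d → ℕ)
    (J : Fin d → Matrix ((l : Fin d) → Fin (n l)) ((l : Fin d) → Fin (n l)) (ZMod 2))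
    (hJ : ∀ (i : Fin d) (v w : (l : Fin d) → Fin (n l)), J i v w =
      if (∀ l, l ≠ i → v l = w l) ∧ ((v i : ℕ) + 1 = w i ∨ (w i : ℕ) + 1 = v i)
      then 1 else 0)
    (M : Matrix ((l : Fin d) → Fin (n l)) ((l : Fin d) → Fin (n l)) (ZMod 2))
    (hsymm : M.IsSymm) (hdiag : ∀ v, M v v = 1)
    (hcomm : ∀ i, M * J i = J i * M) :
    ∀ y : ((l : Fin d) → Fin (n l)) → ZMod 2,
      (∀ (i : Fin d) (v : (l : Fin d) → Fin (n l)),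
        y (Function.update v i (v i).rev) = y v) →
      ∃ z, M.mulVec z = y := by
  classical
  intro y hy
  apply dot_orth_exists M hsymm
  intro x hx
  have hT : ∀ v : (l : Fin d) → Fin (n l), tens n (fun l => gk (v l)) ⬝ᵥ x = 0 := by
    intro v
    apply slot_orth n J hJ M hsymm hdiag hcomm d
    · intro l _
      exact gk_mem_Qm (v l)
    · intro l hl
      exact absurd l.isLt (by omega)
    · exact hx
  set rep : ((l : Fin d) → Fin (n l)) → ((l : Fin d) → Fin (n l)) :=
    fun w l => rep1 (w l) with hrep
  have hyrep : ∀ w, y (rep w) = y w := by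
    intro w
    have hind : ∀ s : Finset (Fin d),
        y (fun l => if l ∈ s then rep1 (w l) else w l) = y w := by
      intro s
      induction s using Finset.induction_on with
      | empty => simp
      | @insert i s hins ihs =>
        have hfun : (fun l => if l ∈ insert i s then rep1 (w l) else w l)
            = Function.update (fun l => if l ∈ s then rep1 (w l) else w l) i (rep1 (w i)) := by
          funext l
          by_cases hl : l = i
          · subst hl
            rw [Function.update_self, if_pos (Finset.mem_insert_self l s)]
          · rw [Function.update_of_ne hl]
            simp [Finset.mem_insert, hl]
        rw [hfun]
        set v' : (l : Fin d) → Fin (n l) := fun l => if l ∈ s then rep1 (w l) else w l with hv'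
        have hv'i : v' i = w i := by
          rw [hv']
          simp [hins]
        rcases rep1_self_or_rev (w i) with hcase | hcase
        · have heq : rep1 (w i) = v' i := by rw [← hcase]; exact hv'i.symm
          rw [heq, Function.update_eq_self]
          exact ihs
        · have h2 : rep1 (w i) = (v' i).rev := by
            rw [hv'i]
            conv_rhs => rw [hcase, Fin.rev_rev]
          rw [h2, hy i v']
          exact ihs
    have huniv := hind Finset.univ
    have : (fun l => if l ∈ (Finset.univ : Finset (Fin d)) then rep1 (w l) else w l) = rep w := by
      funext l
      simp [hrep]
    rwa [this] at huniv
  have hdecomp : y = ∑ v ∈ Finset.univ.image rep, y v • tens n (fun l => gk (v l)) := by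
    funext w
    rw [Finset.sum_apply]
    symm
    have hterm : ∀ v, (y v • tens n (fun l => gk (v l))) w
        = y v * (if rep w = rep v then 1 else 0) := by
      intro v
      simp only [Pi.smul_apply, smul_eq_mul]
      congr 1
      show ∏ l, (if w l = v l ∨ w l = (v l).rev then (1 : ZMod 2) else 0) = _
      rw [Fintype.prod_boole]
      congr 1
      simp only [eq_iff_iff]
      constructor
      · intro hall
        funext l
        exact (rep1_eq_iff (w l) (v l)).mpr (hall l)
      · intro hreq l
        exact (rep1_eq_iff (w l) (v l)).mp (congrFun hreq l)
    calc ∑ v ∈ Finset.univ.image rep, (y v • tens n (fun l => gk (v l))) w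
        = ∑ v ∈ Finset.univ.image rep, y v * (if rep w = rep v then 1 else 0) :=
          Finset.sum_congr rfl fun v _ => hterm v
      _ = y w := by
          rw [Finset.sum_eq_single (rep w)]
          · have hidem : rep (rep w) = rep w := by
              funext l
              exact rep1_idem (w l)
            rw [hidem, if_pos rfl, mul_one]
            exact hyrep w
          · intro b hb hbne
            obtain ⟨c, _, hc⟩ := Finset.mem_image.mp hb
            have hbrep : rep b = b := by
              rw [← hc]
              funext l
              exact rep1_idem (c l)
            rw [if_neg, mul_zero]
            intro hcon
            apply hbne
            rw [← hbrep]
            exact hcon.symm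
          · intro hnmem
            exact absurd (Finset.mem_image_of_mem rep (Finset.mem_univ w)) hnmem
  calc y ⬝ᵥ x = (∑ v ∈ Finset.univ.image rep, y v • tens n (fun l => gk (v l))) ⬝ᵥ x := by
        rw [← hdecomp]
    _ = ∑ v ∈ Finset.univ.image rep, (y v • tens n (fun l => gk (v l))) ⬝ᵥ x := by
        unfold dotProduct
        simp only [Finset.sum_apply, Finset.sum_mul]
        exact Finset.sum_comm
    _ = 0 := by
        apply Finset.sum_eq_zero
        intro v _
        rw [smul_dotProduct, hT v, smul_zero]
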